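/- Let (X_i, Y_i), i = 1, …, n + m, be i.i.d. random pairs with values in X × Y. Let h_{xy} : X × Y → ℝ and h_x : X → ℝ be measurable score functions with h_{xy}(x, y) ≤ h_x(x) for all (x, y). Define μ_α = min{ μ ≥ 0 : [(1/(n+1)) (1 + Σ_{i=1}^n 1{h_{xy}(X_i, Y_i) > μ})] / [(1/m) (1 ∨ Σ_{i=1}^m 1{h_x(X_{n+i}) > μ})] ≤ α }, with μ_α = ∞ (and all indicators 0 at ∞) if no such μ exists. Then E[ Σ_{i=1}^m 1{h_{xy}(X_{n+i}, Y_{n+i}) > μ_α} / (1 ∨ Σ_{i=1}^m 1{h_x(X_{n+i}) > μ_α}) ] ≤ α. -/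

import Mathlib

open MeasureTheory ProbabilityTheory Classical

noncomputable section FCRAux

/-- The threshold set determined by a boolean-pattern condition. -/
def patSet {ι : Type*} [Fintype ι] (v : ι → ℝ) (Q : (ι → Bool) → Prop) : Set ℝ :=
  {μ | 0 ≤ μ ∧ Q (fun i => decide (μ < v i))}

lemma patSet_subset_Ici {ι : Type*} [Fintype ι] (v : ι → ℝ) (Q : (ι → Bool) → Prop) :
    patSet v Q ⊆ Set.Ici 0 := fun _ h => h.1

/-- there is a strictly larger `u` below which no new breakpoint occurs -/
lemma exists_next {ι : Type*} [Fintype ι] (v : ι → ℝ) (μ : ℝ) :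
    ∃ u, μ < u ∧ ∀ i, μ < v i → u ≤ v i := by
  classical
  by_cases h : (Finset.univ.filter (fun i => μ < v i)).Nonempty
  · refine ⟨(Finset.univ.filter (fun i => μ < v i)).inf' h v, ?_, ?_⟩
    · rw [Finset.lt_inf'_iff]
      intro i hi
      exact (Finset.mem_filter.1 hi).2
    · intro i hi
      exact Finset.inf'_le _ (Finset.mem_filter.2 ⟨Finset.mem_univ i, hi⟩)
  · exact ⟨μ + 1, by linarith, fun i hi => absurd ⟨i, Finset.mem_filter.2 ⟨Finset.mem_univ i, hi⟩⟩ h⟩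

lemma pattern_eq_of_between {ι : Type*} [Fintype ι] (v : ι → ℝ) {μ ν u : ℝ}
    (hμν : μ ≤ ν) (hνu : ν < u) (hu : ∀ i, μ < v i → u ≤ v i) :
    (fun i => decide (ν < v i)) = (fun i => decide (μ < v i)) := by
  funext i
  rw [decide_eq_decide]
  constructor
  · intro h; exact lt_of_le_of_lt hμν h
  · intro h; exact lt_of_lt_of_le hνu (hu i h)

lemma patSet_Ico {ι : Type*} [Fintype ι] {v : ι → ℝ} {Q : (ι → Bool) → Prop} {μ : ℝ}
    (hμ : μ ∈ patSet v Q) : ∃ u > μ, Set.Ico μ u ⊆ patSet v Q := by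
  obtain ⟨u, hu1, hu2⟩ := exists_next v μ
  refine ⟨u, hu1, fun ν hν => ?_⟩
  refine ⟨le_trans hμ.1 hν.1, ?_⟩
  rw [pattern_eq_of_between v hν.1 hν.2 hu2]
  exact hμ.2

lemma patSet_sInf_mem {ι : Type*} [Fintype ι] {v : ι → ℝ} {Q : (ι → Bool) → Prop}
    (h : (patSet v Q).Nonempty) : sInf (patSet v Q) ∈ patSet v Q := by
  have hbdd : BddBelow (patSet v Q) := ⟨0, fun x hx => hx.1⟩
  set s := sInf (patSet v Q) with hs
  have hs0 : 0 ≤ s := le_csInf h (fun x hx => hx.1)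
  obtain ⟨u, hu1, hu2⟩ := exists_next v s
  obtain ⟨μ, hμS, hμu⟩ := (csInf_lt_iff hbdd h).1 hu1
  have hsμ : s ≤ μ := csInf_le hbdd hμS
  refine ⟨hs0, ?_⟩
  rw [← pattern_eq_of_between v hsμ hμu hu2]
  exact hμS.2

lemma patSet_exists_rat {ι : Type*} [Fintype ι] {v : ι → ℝ} {Q : (ι → Bool) → Prop}
    (h : (patSet v Q).Nonempty) : ∃ q : ℚ, (q : ℝ) ∈ patSet v Q := by
  obtain ⟨μ, hμ⟩ := h
  obtain ⟨u, hu1, hu2⟩ := patSet_Ico hμ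
  obtain ⟨q, hq1, hq2⟩ := exists_rat_btwn hu1
  exact ⟨q, hu2 ⟨le_of_lt hq1, hq2⟩⟩

lemma patSet_sInf_lt_iff {ι : Type*} [Fintype ι] {v : ι → ℝ} {Q : (ι → Bool) → Prop}
    (h : (patSet v Q).Nonempty) {t : ℝ} :
    sInf (patSet v Q) < t ↔ ∃ q : ℚ, (q : ℝ) ∈ patSet v Q ∧ (q : ℝ) < t := by
  have hbdd : BddBelow (patSet v Q) := ⟨0, fun x hx => hx.1⟩
  constructor
  · intro hlt
    have hmem := patSet_sInf_mem h
    obtain ⟨u, hu1, hu2⟩ := patSet_Ico hmem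
    obtain ⟨q, hq1, hq2⟩ := exists_rat_btwn (lt_min hu1 hlt)
    exact ⟨q, hu2 ⟨le_of_lt hq1, lt_of_lt_of_le hq2 (min_le_left _ _)⟩,
      lt_of_lt_of_le hq2 (min_le_right _ _)⟩
  · rintro ⟨q, hqS, hqt⟩
    exact lt_of_le_of_lt (csInf_le hbdd hqS) hqt

variable {Z : Type*} [MeasurableSpace Z]

variable {ι : Type*} [Fintype ι] {Z : Type*} [MeasurableSpace Z]


lemma measurableSet_mem_patSet (v : ι → Z → ℝ) (hv : ∀ i, Measurable (v i))
    (Q : (ι → Bool) → Prop) (μ : ℝ) :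
    MeasurableSet {z | μ ∈ patSet (fun i => v i z) Q} := by
  have : {z | μ ∈ patSet (fun i => v i z) Q}
      = {z | 0 ≤ μ} ∩ ⋃ (b : ι → Bool) (_ : Q b), (⋂ i, {z | decide (μ < v i z) = b i}) := by
    ext z
    simp only [patSet, Set.mem_setOf_eq, Set.mem_inter_iff, Set.mem_iUnion, Set.mem_iInter]
    constructor
    · rintro ⟨h0, hQ⟩
      exact ⟨h0, (fun i => decide (μ < v i z)), hQ, fun i => rfl⟩
    · rintro ⟨h0, b, hQ, hb⟩
      refine ⟨h0, ?_⟩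
      have : (fun i => decide (μ < v i z)) = b := funext hb
      rw [this]; exact hQ
  rw [this]
  refine MeasurableSet.inter (MeasurableSet.const _) ?_
  refine MeasurableSet.iUnion (fun b => ?_)
  refine MeasurableSet.iUnion (fun _ => ?_)
  refine MeasurableSet.iInter (fun i => ?_)
  rcases Bool.eq_false_or_eq_true (b i) with hb | hb <;> rw [hb]
  · have : {z | decide (μ < v i z) = true} = {z | μ < v i z} := by
      ext z; simp
    rw [this]
    exact measurableSet_lt measurable_const (hv i)
  · have : {z | decide (μ < v i z) = false} = {z | ¬ (μ < v i z)} := by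
      ext z; simp
    rw [this]
    exact (measurableSet_lt measurable_const (hv i)).compl


lemma measurableSet_nonempty_patSet (v : ι → Z → ℝ) (hv : ∀ i, Measurable (v i))
    (Q : (ι → Bool) → Prop) :
    MeasurableSet {z | (patSet (fun i => v i z) Q).Nonempty} := by
  have : {z | (patSet (fun i => v i z) Q).Nonempty}
      = ⋃ q : ℚ, {z | (q : ℝ) ∈ patSet (fun i => v i z) Q} := by
    ext z
    simp only [Set.mem_setOf_eq, Set.mem_iUnion]
    exact ⟨fun h => patSet_exists_rat h, fun ⟨q, hq⟩ => ⟨q, hq⟩⟩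
  rw [this]
  exact MeasurableSet.iUnion (fun q => measurableSet_mem_patSet v hv Q q)

lemma measurable_sInf_patSet (v : ι → Z → ℝ) (hv : ∀ i, Measurable (v i))
    (Q : (ι → Bool) → Prop) :
    Measurable (fun z => sInf (patSet (fun i => v i z) Q)) := by
  apply measurable_of_Iio
  intro t
  have : (fun z => sInf (patSet (fun i => v i z) Q)) ⁻¹' Set.Iio t
      = (⋃ q : ℚ, ({z | (q : ℝ) ∈ patSet (fun i => v i z) Q} ∩ {z | (q : ℝ) < t}))
        ∪ ({z | (patSet (fun i => v i z) Q).Nonempty}ᶜ ∩ {z | (0:ℝ) < t}) := by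
    ext z
    simp only [Set.mem_preimage, Set.mem_Iio, Set.mem_union, Set.mem_iUnion, Set.mem_inter_iff,
      Set.mem_setOf_eq, Set.mem_compl_iff]
    by_cases hne : (patSet (fun i => v i z) Q).Nonempty
    · rw [patSet_sInf_lt_iff hne]
      constructor
      · rintro ⟨q, h1, h2⟩; exact Or.inl ⟨q, h1, h2⟩
      · rintro (⟨q, h1, h2⟩ | ⟨h1, _⟩)
        · exact ⟨q, h1, h2⟩
        · exact absurd hne h1
    · have hemp : patSet (fun i => v i z) Q = ∅ := Set.not_nonempty_iff_eq_empty.1 hne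
      have h0 : sInf (patSet (fun i => v i z) Q) = 0 := by rw [hemp, Real.sInf_empty]
      rw [h0]
      constructor
      · intro h; exact Or.inr ⟨hne, h⟩
      · rintro (⟨q, h1, _⟩ | ⟨_, h2⟩)
        · exact absurd ⟨_, h1⟩ hne
        · exact h2
  rw [this]
  refine MeasurableSet.union ?_ ?_
  · exact MeasurableSet.iUnion (fun q => (measurableSet_mem_patSet v hv Q q).inter
      (MeasurableSet.const _))
  · exact ((measurableSet_nonempty_patSet v hv Q).compl).inter (MeasurableSet.const _)

/-- stability of the infimum threshold under enlarging the set consistently below `x` -/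
lemma stab {S S' : Set ℝ} {x : ℝ}
    (hsub : S ⊆ S') (hiff : ∀ μ, μ < x → (μ ∈ S ↔ μ ∈ S'))
    (hatt : S.Nonempty → sInf S ∈ S) (hatt' : S'.Nonempty → sInf S' ∈ S')
    (h0 : ∀ μ ∈ S', 0 ≤ μ)
    (hNE : S.Nonempty) (hlt : sInf S < x) :
    S'.Nonempty ∧ sInf S' = sInf S ∧ sInf S' ∈ S := by
  have hbdd' : BddBelow S' := ⟨0, h0⟩
  have hbdd : BddBelow S := hbdd'.mono hsub
  have hmem : sInf S ∈ S := hatt hNE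
  have hNE' : S'.Nonempty := ⟨sInf S, hsub hmem⟩
  have h1 : sInf S' ≤ sInf S := csInf_le_csInf hbdd' hNE hsub
  have hmem' : sInf S' ∈ S' := hatt' hNE'
  have h2 : sInf S' ∈ S := (hiff _ (lt_of_le_of_lt h1 hlt)).2 hmem'
  have h3 : sInf S ≤ sInf S' := csInf_le hbdd h2
  exact ⟨hNE', le_antisymm h1 h3, h2⟩

lemma stab' {S S' : Set ℝ} {x : ℝ}
    (hsub : S ⊆ S') (hiff : ∀ μ, μ < x → (μ ∈ S ↔ μ ∈ S'))
    (hatt : S.Nonempty → sInf S ∈ S) (hatt' : S'.Nonempty → sInf S' ∈ S')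
    (h0 : ∀ μ ∈ S', 0 ≤ μ)
    (hNE' : S'.Nonempty) (hlt' : sInf S' < x) :
    S.Nonempty ∧ sInf S = sInf S' := by
  have hbdd' : BddBelow S' := ⟨0, h0⟩
  have hbdd : BddBelow S := hbdd'.mono hsub
  have hmem' : sInf S' ∈ S' := hatt' hNE'
  have h2 : sInf S' ∈ S := (hiff _ hlt').2 hmem'
  have hNE : S.Nonempty := ⟨_, h2⟩
  have h3 : sInf S ≤ sInf S' := csInf_le hbdd h2
  have h1 : sInf S' ≤ sInf S := csInf_le_csInf hbdd' hNE hsub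
  exact ⟨hNE, le_antisymm h3 h1⟩




variable (n m : ℕ) (α : ℝ)

def fcrQS (p : Fin n ⊕ Fin m → Bool) : Prop :=
  ((1 / ((n : ℝ) + 1)) * (1 + ∑ i : Fin n, (if p (Sum.inl i) then (1:ℝ) else 0))) /
    ((1 / (m : ℝ)) * max 1 (∑ l : Fin m, (if p (Sum.inr l) then (1:ℝ) else 0))) ≤ α

def fcrQP (j : Fin m) (p : Fin n ⊕ Fin m → Bool) : Prop :=
  ((1 / ((n : ℝ) + 1)) * (1 + ∑ i : Fin n, (if p (Sum.inl i) then (1:ℝ) else 0))) /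
    ((1 / (m : ℝ)) * (1 + ∑ l ∈ Finset.univ.erase j, (if p (Sum.inr l) then (1:ℝ) else 0))) ≤ α

def fcrQB (j : Fin m) (p : Fin n ⊕ Fin m → Bool) : Prop :=
  ((1 / ((n : ℝ) + 1)) *
      ((if p (Sum.inr j) then (1:ℝ) else 0) + ∑ i : Fin n, (if p (Sum.inl i) then (1:ℝ) else 0))) /
    ((1 / (m : ℝ)) * (1 + ∑ l ∈ Finset.univ.erase j, (if p (Sum.inr l) then (1:ℝ) else 0))) ≤ α

def fcrSbar (j : Fin m) (a : Fin n → ℝ) (b c : Fin m → ℝ) : Set ℝ :=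
  patSet (Sum.elim a (Function.update b j (c j))) (fcrQB n m α j)

def fcrK (j : Fin m) (a : Fin n → ℝ) (c : Fin m → ℝ) (μ : ℝ) : ℝ :=
  (if μ < c j then (1:ℝ) else 0) + ∑ i : Fin n, (if μ < a i then (1:ℝ) else 0)

def fcrPsi (j : Fin m) (a : Fin n → ℝ) (b c : Fin m → ℝ) : ℝ :=
  if (fcrSbar n m α j a b c).Nonempty ∧ sInf (fcrSbar n m α j a b c) < c j
  then (fcrK n m j a c (sInf (fcrSbar n m α j a b c)))⁻¹ else 0

-- sum helpers
lemma fcr_sum_erase_update {m : ℕ} (j : Fin m) (b : Fin m → ℝ) (x : ℝ) (F : ℝ → ℝ) :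
    ∑ l ∈ Finset.univ.erase j, F (Function.update b j x l)
      = ∑ l ∈ Finset.univ.erase j, F (b l) :=
  Finset.sum_congr rfl (fun l hl => by rw [Function.update_of_ne (Finset.mem_erase.1 hl).1])

lemma fcr_sum_split {n : ℕ} (k : Fin n) (a : Fin n → ℝ) (F : ℝ → ℝ) :
    ∑ i : Fin n, F (a i) = F (a k) + ∑ i ∈ Finset.univ.erase k, F (a i) :=
  (Finset.add_sum_erase _ _ (Finset.mem_univ k)).symm

lemma fcr_sum_update_split {n : ℕ} (k : Fin n) (a : Fin n → ℝ) (x : ℝ) (F : ℝ → ℝ) :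
    ∑ i : Fin n, F (Function.update a k x i)
      = F x + ∑ i ∈ Finset.univ.erase k, F (a i) := by
  rw [fcr_sum_split k (Function.update a k x) F, Function.update_self]
  congr 1
  exact Finset.sum_congr rfl (fun i hi => by rw [Function.update_of_ne (Finset.mem_erase.1 hi).1])

lemma fcrK_nonneg (j : Fin m) (a : Fin n → ℝ) (c : Fin m → ℝ) (μ : ℝ) :
    0 ≤ fcrK n m j a c μ := by
  unfold fcrK
  have h1 : (0:ℝ) ≤ if μ < c j then (1:ℝ) else 0 := by positivity
  have h2 : (0:ℝ) ≤ ∑ i : Fin n, (if μ < a i then (1:ℝ) else 0) :=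
    Finset.sum_nonneg (fun i _ => by positivity)
  linarith

lemma fcrPsi_nonneg (j : Fin m) (a : Fin n → ℝ) (b c : Fin m → ℝ) :
    0 ≤ fcrPsi n m α j a b c := by
  unfold fcrPsi
  split
  · exact inv_nonneg.2 (fcrK_nonneg n m j a c _)
  · exact le_refl 0

lemma fcrPsi_le_one (j : Fin m) (a : Fin n → ℝ) (b c : Fin m → ℝ) :
    fcrPsi n m α j a b c ≤ 1 := by
  unfold fcrPsi
  split
  case isTrue h =>
    apply inv_le_one_of_one_le₀
    unfold fcrK
    have h1 : (if sInf (fcrSbar n m α j a b c) < c j then (1:ℝ) else 0) = 1 := if_pos h.2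
    have h2 : (0:ℝ) ≤ ∑ i : Fin n, (if sInf (fcrSbar n m α j a b c) < a i then (1:ℝ) else 0) :=
      Finset.sum_nonneg (fun i _ => by positivity)
    rw [h1]; linarith
  case isFalse h => exact zero_le_one

lemma fcrSbar_swap (j : Fin m) (k : Fin n) (a : Fin n → ℝ) (b c : Fin m → ℝ) :
    fcrSbar n m α j (Function.update a k (c j)) b (Function.update c j (a k))
      = fcrSbar n m α j a b c := by
  unfold fcrSbar patSet
  ext μ
  simp only [Set.mem_setOf_eq, fcrQB, decide_eq_true_eq]
  simp only [Set.mem_setOf_eq, fcrQB, Sum.elim_inl, Sum.elim_inr, decide_eq_true_eq,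
    Function.update_self]
  erw [fcr_sum_update_split k a (c j) (fun x => if μ < x then (1:ℝ) else 0),
      fcr_sum_erase_update j b (a k) (fun x => if μ < x then (1:ℝ) else 0),
      fcr_sum_erase_update j b (c j) (fun x => if μ < x then (1:ℝ) else 0),
      fcr_sum_split k a (fun x => if μ < x then (1:ℝ) else 0)]
  ring_nf

lemma fcrK_swap (j : Fin m) (k : Fin n) (a : Fin n → ℝ) (c : Fin m → ℝ) (μ : ℝ) :
    fcrK n m j (Function.update a k (c j)) (Function.update c j (a k)) μ
      = fcrK n m j a c μ := by
  unfold fcrK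
  rw [Function.update_self,
      fcr_sum_update_split k a (c j) (fun x => if μ < x then (1:ℝ) else 0),
      fcr_sum_split k a (fun x => if μ < x then (1:ℝ) else 0)]
  ring

lemma fcr_stepB (j : Fin m) (a : Fin n → ℝ) (b c : Fin m → ℝ) :
    (∑ k : Fin n, fcrPsi n m α j (Function.update a k (c j)) b (Function.update c j (a k)))
      + fcrPsi n m α j a b c ≤ 1 := by
  by_cases hne : (fcrSbar n m α j a b c).Nonempty
  · set T := sInf (fcrSbar n m α j a b c) with hT
    have hterm : ∀ k : Fin n,
        fcrPsi n m α j (Function.update a k (c j)) b (Function.update c j (a k))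
          = (if T < a k then (1:ℝ) else 0) * (fcrK n m j a c T)⁻¹ := by
      intro k
      unfold fcrPsi
      rw [fcrSbar_swap, fcrK_swap, Function.update_self, ← hT]
      by_cases h : T < a k
      · rw [if_pos ⟨hne, h⟩, if_pos h, one_mul]
      · rw [if_neg (fun hc => h hc.2), if_neg h, zero_mul]
    have hterm0 : fcrPsi n m α j a b c
        = (if T < c j then (1:ℝ) else 0) * (fcrK n m j a c T)⁻¹ := by
      unfold fcrPsi
      rw [← hT]
      by_cases h : T < c j
      · rw [if_pos ⟨hne, h⟩, if_pos h, one_mul]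
      · rw [if_neg (fun hc => h hc.2), if_neg h, zero_mul]
    calc (∑ k : Fin n, fcrPsi n m α j (Function.update a k (c j)) b (Function.update c j (a k)))
        + fcrPsi n m α j a b c
        = (∑ k : Fin n, (if T < a k then (1:ℝ) else 0) * (fcrK n m j a c T)⁻¹)
          + (if T < c j then (1:ℝ) else 0) * (fcrK n m j a c T)⁻¹ := by
          rw [hterm0]; congr 1; exact Finset.sum_congr rfl (fun k _ => hterm k)
      _ = fcrK n m j a c T * (fcrK n m j a c T)⁻¹ := by
          rw [← Finset.sum_mul, ← add_mul]
          congr 1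
          unfold fcrK
          ring
      _ ≤ 1 := by
          rcases eq_or_ne (fcrK n m j a c T) 0 with h | h
          · rw [h, zero_mul]; exact zero_le_one
          · rw [mul_inv_cancel₀ h]
  · have hz : ∀ k : Fin n,
        fcrPsi n m α j (Function.update a k (c j)) b (Function.update c j (a k)) = 0 := by
      intro k
      unfold fcrPsi
      rw [fcrSbar_swap]
      exact if_neg (fun hc => hne hc.1)
    have hz0 : fcrPsi n m α j a b c = 0 := by
      unfold fcrPsi
      exact if_neg (fun hc => hne hc.1)
    rw [hz0, Finset.sum_congr rfl (fun k _ => hz k), Finset.sum_const, smul_zero, add_zero]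
    exact zero_le_one

lemma mem_fcrSS_iff (a : Fin n → ℝ) (b : Fin m → ℝ) (μ : ℝ) :
    μ ∈ patSet (Sum.elim a b) (fcrQS n m α) ↔ 0 ≤ μ ∧
      ((1 / ((n : ℝ) + 1)) * (1 + ∑ i : Fin n, (if μ < a i then (1:ℝ) else 0))) /
        ((1 / (m : ℝ)) * max 1 (∑ l : Fin m, (if μ < b l then (1:ℝ) else 0))) ≤ α := by
  simp only [patSet, fcrQS, Set.mem_setOf_eq, decide_eq_true_eq]
  exact Iff.rfl

lemma mem_fcrSP_iff (j : Fin m) (a : Fin n → ℝ) (b : Fin m → ℝ) (μ : ℝ) :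
    μ ∈ patSet (Sum.elim a b) (fcrQP n m α j) ↔ 0 ≤ μ ∧
      ((1 / ((n : ℝ) + 1)) * (1 + ∑ i : Fin n, (if μ < a i then (1:ℝ) else 0))) /
        ((1 / (m : ℝ)) * (1 + ∑ l ∈ Finset.univ.erase j, (if μ < b l then (1:ℝ) else 0))) ≤ α := by
  simp only [patSet, fcrQP, Set.mem_setOf_eq, decide_eq_true_eq]
  exact Iff.rfl

lemma mem_fcrSB_iff (j : Fin m) (a : Fin n → ℝ) (b c : Fin m → ℝ) (μ : ℝ) :
    μ ∈ fcrSbar n m α j a b c ↔ 0 ≤ μ ∧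
      ((1 / ((n : ℝ) + 1)) *
          ((if μ < c j then (1:ℝ) else 0) + ∑ i : Fin n, (if μ < a i then (1:ℝ) else 0))) /
        ((1 / (m : ℝ)) * (1 + ∑ l ∈ Finset.univ.erase j, (if μ < b l then (1:ℝ) else 0))) ≤ α := by
  simp only [fcrSbar, patSet, Set.mem_setOf_eq, fcrQB, decide_eq_true_eq]
  simp only [fcrSbar, patSet, Set.mem_setOf_eq, fcrQB, Sum.elim_inl, Sum.elim_inr,
    decide_eq_true_eq, Function.update_self]
  erw [fcr_sum_erase_update j b (c j) (fun x => if μ < x then (1:ℝ) else 0)]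
  exact Iff.rfl

lemma fcr_stepA (hn : 1 ≤ n) (hm : 1 ≤ m) (hα : 0 < α)
    (a : Fin n → ℝ) (b c : Fin m → ℝ) (hcb : ∀ j, c j ≤ b j) :
    (if (patSet (Sum.elim a b) (fcrQS n m α)).Nonempty then
        (∑ j : Fin m, (if sInf (patSet (Sum.elim a b) (fcrQS n m α)) < c j then (1:ℝ) else 0)) /
          max 1 (∑ j : Fin m,
            (if sInf (patSet (Sum.elim a b) (fcrQS n m α)) < b j then (1:ℝ) else 0))
      else 0)
    ≤ (α * ((n:ℝ)+1) / m) * ∑ j : Fin m, fcrPsi n m α j a b c := by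
  have hm' : (0:ℝ) < m := by exact_mod_cast hm
  have hn1 : (0:ℝ) < (n:ℝ) + 1 := by positivity
  have hβ : (0:ℝ) ≤ α * ((n:ℝ)+1) / m := by positivity
  have hRHS : (0:ℝ) ≤ (α * ((n:ℝ)+1) / m) * ∑ j : Fin m, fcrPsi n m α j a b c :=
    mul_nonneg hβ (Finset.sum_nonneg (fun j _ => fcrPsi_nonneg n m α j a b c))
  by_cases hne : (patSet (Sum.elim a b) (fcrQS n m α)).Nonempty
  swap
  · rw [if_neg hne]; exact hRHS
  rw [if_pos hne]
  set μs := sInf (patSet (Sum.elim a b) (fcrQS n m α)) with hμs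
  have hper : ∀ j : Fin m,
      (if μs < c j then (1:ℝ) else 0) /
          max 1 (∑ l : Fin m, (if μs < b l then (1:ℝ) else 0))
        ≤ (α * ((n:ℝ)+1) / m) * fcrPsi n m α j a b c := by
    intro j
    by_cases hcj : μs < c j
    swap
    · rw [if_neg hcj, zero_div]
      exact mul_nonneg hβ (fcrPsi_nonneg n m α j a b c)
    rw [if_pos hcj]
    have hbj : μs < b j := lt_of_lt_of_le hcj (hcb j)
    -- step 1 : compare with the primed set
    have hsub1 : patSet (Sum.elim a b) (fcrQS n m α) ⊆ patSet (Sum.elim a b) (fcrQP n m α j) := by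
      intro μ hμ
      rw [mem_fcrSS_iff] at hμ
      rw [mem_fcrSP_iff]
      obtain ⟨h0, hq⟩ := hμ
      refine ⟨h0, ?_⟩
      have hR0 : (0:ℝ) ≤ ∑ l ∈ Finset.univ.erase j, (if μ < b l then (1:ℝ) else 0) :=
        Finset.sum_nonneg (fun l _ => by positivity)
      have hD : ∑ l : Fin m, (if μ < b l then (1:ℝ) else 0)
          = (if μ < b j then (1:ℝ) else 0)
            + ∑ l ∈ Finset.univ.erase j, (if μ < b l then (1:ℝ) else 0) :=
        fcr_sum_split j b (fun x => if μ < x then (1:ℝ) else 0)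
      have hind1 : (if μ < b j then (1:ℝ) else 0) ≤ 1 := by split <;> norm_num
      have hmaxle : max 1 (∑ l : Fin m, (if μ < b l then (1:ℝ) else 0))
          ≤ 1 + ∑ l ∈ Finset.univ.erase j, (if μ < b l then (1:ℝ) else 0) := by
        apply max_le (by linarith)
        rw [hD]; linarith
      have hN0 : (0:ℝ) ≤ (1 / ((n : ℝ) + 1)) *
          (1 + ∑ i : Fin n, (if μ < a i then (1:ℝ) else 0)) := by
        have : (0:ℝ) ≤ ∑ i : Fin n, (if μ < a i then (1:ℝ) else 0) :=
          Finset.sum_nonneg (fun i _ => by positivity)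
        positivity
      have hd1pos : (0:ℝ) < (1 / (m:ℝ)) *
          max 1 (∑ l : Fin m, (if μ < b l then (1:ℝ) else 0)) := by
        apply mul_pos (by positivity)
        exact lt_of_lt_of_le one_pos (le_max_left _ _)
      refine le_trans (div_le_div_of_nonneg_left hN0 hd1pos ?_) hq
      exact mul_le_mul_of_nonneg_left hmaxle (by positivity)
    have hiff1 : ∀ μ, μ < b j →
        (μ ∈ patSet (Sum.elim a b) (fcrQS n m α) ↔ μ ∈ patSet (Sum.elim a b) (fcrQP n m α j)) := by
      intro μ hμ
      rw [mem_fcrSS_iff, mem_fcrSP_iff]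
      have hR0 : (0:ℝ) ≤ ∑ l ∈ Finset.univ.erase j, (if μ < b l then (1:ℝ) else 0) :=
        Finset.sum_nonneg (fun l _ => by positivity)
      have hD : ∑ l : Fin m, (if μ < b l then (1:ℝ) else 0)
          = (if μ < b j then (1:ℝ) else 0)
            + ∑ l ∈ Finset.univ.erase j, (if μ < b l then (1:ℝ) else 0) :=
        fcr_sum_split j b (fun x => if μ < x then (1:ℝ) else 0)
      have hmax : max 1 (∑ l : Fin m, (if μ < b l then (1:ℝ) else 0))
          = 1 + ∑ l ∈ Finset.univ.erase j, (if μ < b l then (1:ℝ) else 0) := by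
        rw [hD, if_pos hμ]
        exact max_eq_right (by linarith)
      rw [hmax]
    obtain ⟨hneP, heqP, -⟩ := stab hsub1 hiff1
      (fun h => patSet_sInf_mem h) (fun h => patSet_sInf_mem h) (fun μ hμ => hμ.1) hne hbj
    -- step 2 : compare with the barred set
    have hsub2 : patSet (Sum.elim a b) (fcrQP n m α j) ⊆ fcrSbar n m α j a b c := by
      intro μ hμ
      rw [mem_fcrSP_iff] at hμ
      rw [mem_fcrSB_iff]
      obtain ⟨h0, hq⟩ := hμ
      refine ⟨h0, ?_⟩
      have hR0 : (0:ℝ) ≤ ∑ l ∈ Finset.univ.erase j, (if μ < b l then (1:ℝ) else 0) :=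
        Finset.sum_nonneg (fun l _ => by positivity)
      have hdpos : (0:ℝ) < (1 / (m:ℝ)) *
          (1 + ∑ l ∈ Finset.univ.erase j, (if μ < b l then (1:ℝ) else 0)) := by
        apply mul_pos (by positivity) (by linarith)
      refine le_trans ((div_le_div_iff_of_pos_right hdpos).2 ?_) hq
      apply mul_le_mul_of_nonneg_left _ (by positivity)
      have : (if μ < c j then (1:ℝ) else 0) ≤ 1 := by split <;> norm_num
      linarith
    have hiff2 : ∀ μ, μ < c j →
        (μ ∈ patSet (Sum.elim a b) (fcrQP n m α j) ↔ μ ∈ fcrSbar n m α j a b c) := by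
      intro μ hμ
      rw [mem_fcrSP_iff, mem_fcrSB_iff, if_pos hμ]
    have hattB : (fcrSbar n m α j a b c).Nonempty → sInf (fcrSbar n m α j a b c) ∈
        fcrSbar n m α j a b c := fun h => patSet_sInf_mem h
    obtain ⟨hneB, heqB, -⟩ := stab hsub2 hiff2
      (fun h => patSet_sInf_mem h) hattB (fun μ hμ => hμ.1) hneP (by rw [heqP]; exact hcj)
    -- value of Psi
    have hPsi : fcrPsi n m α j a b c = (fcrK n m j a c μs)⁻¹ := by
      unfold fcrPsi
      rw [if_pos ⟨hneB, by rw [heqB, heqP]; exact hcj⟩, heqB, heqP]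
    -- extract the membership inequality at μs
    have hmemP : μs ∈ patSet (Sum.elim a b) (fcrQP n m α j) := by
      rw [hμs, ← heqP]; exact patSet_sInf_mem hneP
    rw [mem_fcrSP_iff] at hmemP
    obtain ⟨-, hq⟩ := hmemP
    set C := ∑ i : Fin n, (if μs < a i then (1:ℝ) else 0) with hCdef
    set R := ∑ l ∈ Finset.univ.erase j, (if μs < b l then (1:ℝ) else 0) with hRdef
    have hC0 : (0:ℝ) ≤ C := Finset.sum_nonneg (fun i _ => by positivity)
    have hR0 : (0:ℝ) ≤ R := Finset.sum_nonneg (fun l _ => by positivity)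
    have hKval : fcrK n m j a c μs = 1 + C := by
      unfold fcrK; rw [if_pos hcj]
    have hDval : ∑ l : Fin m, (if μs < b l then (1:ℝ) else 0) = 1 + R := by
      rw [fcr_sum_split j b (fun x => if μs < x then (1:ℝ) else 0), if_pos hbj]
    have hmax : max 1 (∑ l : Fin m, (if μs < b l then (1:ℝ) else 0)) = 1 + R := by
      rw [hDval]
      exact max_eq_right (by linarith)
    rw [hmax, hPsi, hKval]
    have h1C : (0:ℝ) < 1 + C := by linarith
    have h1R : (0:ℝ) < 1 + R := by linarith
    have hdpos : (0:ℝ) < (1 / (m:ℝ)) * (1 + R) := by positivity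
    have hclear : (1 / ((n:ℝ)+1)) * (1 + C) ≤ α * ((1 / (m:ℝ)) * (1 + R)) :=
      (div_le_iff₀ hdpos).1 hq
    have hclear2 : (m:ℝ) * (1 + C) ≤ α * ((n:ℝ)+1) * (1 + R) := by
      have h := mul_le_mul_of_nonneg_left hclear (le_of_lt (mul_pos hn1 hm'))
      calc (m:ℝ) * (1 + C) = ((n:ℝ)+1) * (m:ℝ) * ((1 / ((n:ℝ)+1)) * (1 + C)) := by
            field_simp
            try ring
          _ ≤ ((n:ℝ)+1) * (m:ℝ) * (α * ((1 / (m:ℝ)) * (1 + R))) := h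
          _ = α * ((n:ℝ)+1) * (1 + R) := by
            field_simp
            try ring
    have hm0 : (m:ℝ) ≠ 0 := ne_of_gt hm'
    have hC0' : (1:ℝ) + C ≠ 0 := ne_of_gt h1C
    rw [div_le_iff₀ h1R]
    have heq : α * ((n:ℝ)+1) / (m:ℝ) * (1 + C)⁻¹ * (1 + R)
        = (α * ((n:ℝ)+1) * (1 + R)) / ((m:ℝ) * (1 + C)) := by
      field_simp
      try ring
    rw [heq, le_div_iff₀ (mul_pos hm' h1C), one_mul]
    exact hclear2
  calc (∑ j : Fin m, (if μs < c j then (1:ℝ) else 0)) /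
        max 1 (∑ j : Fin m, (if μs < b j then (1:ℝ) else 0))
      = ∑ j : Fin m, ((if μs < c j then (1:ℝ) else 0) /
          max 1 (∑ l : Fin m, (if μs < b l then (1:ℝ) else 0))) := Finset.sum_div _ _ _
    _ ≤ ∑ j : Fin m, (α * ((n:ℝ)+1) / m) * fcrPsi n m α j a b c :=
        Finset.sum_le_sum (fun j _ => hper j)
    _ = (α * ((n:ℝ)+1) / m) * ∑ j : Fin m, fcrPsi n m α j a b c := by
        rw [Finset.mul_sum]

lemma fcrPsi_update_b (j : Fin m) (a : Fin n → ℝ) (b c : Fin m → ℝ) (x : ℝ) :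
    fcrPsi n m α j a (Function.update b j x) c = fcrPsi n m α j a b c := by
  unfold fcrPsi fcrSbar
  rw [Function.update_idem]

section FCRMeas

variable {Z' : Type*} [MeasurableSpace Z'] (n m : ℕ) (α : ℝ)
variable (A : Z' → Fin n → ℝ) (B C : Z' → Fin m → ℝ)

def fcrF : Z' → ℝ := fun z =>
  if (patSet (Sum.elim (A z) (B z)) (fcrQS n m α)).Nonempty then
    (∑ j : Fin m,
        (if sInf (patSet (Sum.elim (A z) (B z)) (fcrQS n m α)) < C z j then (1:ℝ) else 0)) /
      max 1 (∑ j : Fin m,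
        (if sInf (patSet (Sum.elim (A z) (B z)) (fcrQS n m α)) < B z j then (1:ℝ) else 0))
  else 0

variable (hA : ∀ i, Measurable (fun z => A z i)) (hB : ∀ l, Measurable (fun z => B z l))
  (hC : ∀ l, Measurable (fun z => C z l))

include hA hB in
lemma fcr_meas_vS : ∀ i : Fin n ⊕ Fin m, Measurable (fun z => Sum.elim (A z) (B z) i) := by
  rintro (i | l)
  · exact hA i
  · exact hB l

include hA hB hC in
lemma fcr_meas_vB (j : Fin m) :
    ∀ i : Fin n ⊕ Fin m,
      Measurable (fun z => Sum.elim (A z) (Function.update (B z) j (C z j)) i) := by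
  rintro (i | l)
  · exact hA i
  · simp only [Sum.elim_inr, Function.update_apply]
    by_cases h : l = j
    · simp only [h, if_true]
      exact hC j
    · simp only [h, if_false]
      exact hB l

include hA hB in
lemma fcr_meas_NE :
    MeasurableSet {z | (patSet (Sum.elim (A z) (B z)) (fcrQS n m α)).Nonempty} :=
  measurableSet_nonempty_patSet (fun i z => Sum.elim (A z) (B z) i)
    (fcr_meas_vS n m A B hA hB) (fcrQS n m α)

include hA hB in
lemma fcr_meas_sInfS :
    Measurable (fun z => sInf (patSet (Sum.elim (A z) (B z)) (fcrQS n m α))) :=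
  measurable_sInf_patSet (fun i z => Sum.elim (A z) (B z) i)
    (fcr_meas_vS n m A B hA hB) (fcrQS n m α)

include hA hB hC in
lemma fcr_meas_NEB (j : Fin m) :
    MeasurableSet {z | (fcrSbar n m α j (A z) (B z) (C z)).Nonempty} :=
  measurableSet_nonempty_patSet (fun i z => Sum.elim (A z) (Function.update (B z) j (C z j)) i)
    (fcr_meas_vB n m A B C hA hB hC j) (fcrQB n m α j)

include hA hB hC in
lemma fcr_meas_sInfB (j : Fin m) :
    Measurable (fun z => sInf (fcrSbar n m α j (A z) (B z) (C z))) :=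
  measurable_sInf_patSet (fun i z => Sum.elim (A z) (Function.update (B z) j (C z j)) i)
    (fcr_meas_vB n m A B C hA hB hC j) (fcrQB n m α j)

include hA hB hC in
lemma fcr_meas_F : Measurable (fcrF n m α A B C) := by
  apply Measurable.ite (fcr_meas_NE n m α A B hA hB)
  · apply Measurable.div
    · apply Finset.measurable_sum
      intro j _
      exact Measurable.ite
        (measurableSet_lt (fcr_meas_sInfS n m α A B hA hB) (hC j))
        measurable_const measurable_const
    · apply Measurable.max measurable_const
      apply Finset.measurable_sum
      intro j _
      exact Measurable.ite
        (measurableSet_lt (fcr_meas_sInfS n m α A B hA hB) (hB j))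
        measurable_const measurable_const
  · exact measurable_const

include hA hB hC in
lemma fcr_meas_Psi (j : Fin m) :
    Measurable (fun z => fcrPsi n m α j (A z) (B z) (C z)) := by
  unfold fcrPsi
  apply Measurable.ite
  · exact MeasurableSet.inter (fcr_meas_NEB n m α A B C hA hB hC j)
      (measurableSet_lt (fcr_meas_sInfB n m α A B C hA hB hC j) (hC j))
  · apply Measurable.inv
    unfold fcrK
    apply Measurable.add
    · exact Measurable.ite
        (measurableSet_lt (fcr_meas_sInfB n m α A B C hA hB hC j) (hC j))
        measurable_const measurable_const
    · apply Finset.measurable_sum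
      intro i _
      exact Measurable.ite
        (measurableSet_lt (fcr_meas_sInfB n m α A B C hA hB hC j) (hA i))
        measurable_const measurable_const
  · exact measurable_const

lemma fcrF_nonneg (z : Z') : 0 ≤ fcrF n m α A B C z := by
  unfold fcrF
  split
  · apply div_nonneg
    · exact Finset.sum_nonneg (fun j _ => by positivity)
    · exact le_trans zero_le_one (le_max_left _ _)
  · exact le_refl 0

lemma fcrF_le (z : Z') : fcrF n m α A B C z ≤ m := by
  unfold fcrF
  split
  · have h1 : (∑ j : Fin m,
        (if sInf (patSet (Sum.elim (A z) (B z)) (fcrQS n m α)) < C z j then (1:ℝ) else 0)) ≤ m := by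
      calc (∑ j : Fin m,
          (if sInf (patSet (Sum.elim (A z) (B z)) (fcrQS n m α)) < C z j then (1:ℝ) else 0))
          ≤ ∑ _j : Fin m, (1:ℝ) := Finset.sum_le_sum (fun j _ => by split <;> norm_num)
        _ = m := by simp
    refine le_trans (div_le_self ?_ (le_max_left _ _)) h1
    exact Finset.sum_nonneg (fun j _ => by positivity)
  · positivity

end FCRMeas

end FCRAux

/-- FCR-type bound for thresholding dominated scores (Lemma: alternative formulation).
With iid pairs, scores h_{xy}(x,y) ≤ h_x(x), and μ_α the smallest μ ≥ 0 at which the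
calibration-estimated FCP drops below α (∞, i.e. all indicators 0, if none exists), the
expected false coverage proportion on the test sample is at most α. -/
theorem stmt14 {Ω 𝓧 𝓨 : Type*} [MeasureSpace Ω] [IsProbabilityMeasure (ℙ : Measure Ω)]
    [MeasurableSpace 𝓧] [MeasurableSpace 𝓨]
    (n m : ℕ) (hn : 1 ≤ n) (hm : 1 ≤ m) (α : ℝ) (hα : α ∈ Set.Ioo (0:ℝ) 1)
    (X : Fin (n + m) → Ω → 𝓧) (Y : Fin (n + m) → Ω → 𝓨)
    (P : Measure (𝓧 × 𝓨)) [IsProbabilityMeasure P]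
    (hmeas : ∀ i, Measurable (fun ω => (X i ω, Y i ω)))
    (hlaw : ∀ i, Measure.map (fun ω => (X i ω, Y i ω)) ℙ = P)
    (hindep : iIndepFun (fun i ω => (X i ω, Y i ω)) ℙ)
    (hxy : 𝓧 × 𝓨 → ℝ) (hx : 𝓧 → ℝ)
    (hxym : Measurable hxy) (hxm : Measurable hx)
    (hdom : ∀ x y, hxy (x, y) ≤ hx x)
    -- the (random) set of feasible thresholds
    (S : Ω → Set ℝ)
    (hS : ∀ ω, S ω = {μ : ℝ | 0 ≤ μ ∧
      ((1 / ((n : ℝ) + 1)) *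
          (1 + ∑ i : Fin n,
            (if μ < hxy (X (Fin.castAdd m i) ω, Y (Fin.castAdd m i) ω) then (1:ℝ) else 0))) /
        ((1 / (m : ℝ)) *
          max 1 (∑ i : Fin m,
            (if μ < hx (X (Fin.natAdd n i) ω) then (1:ℝ) else 0))) ≤ α}) :
    ∫ ω,
      (if (S ω).Nonempty then
        (∑ i : Fin m,
            (if sInf (S ω) < hxy (X (Fin.natAdd n i) ω, Y (Fin.natAdd n i) ω) then (1:ℝ) else 0)) /
          max 1 (∑ i : Fin m,
            (if sInf (S ω) < hx (X (Fin.natAdd n i) ω) then (1:ℝ) else 0))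
      else 0) ∂ℙ ≤ α := by
  have hα0 : 0 < α := hα.1
  have hm' : (0:ℝ) < m := by exact_mod_cast hm
  have hn1 : (0:ℝ) < (n:ℝ) + 1 := by positivity
  -- the random vector of all data points
  set W : Ω → (Fin (n + m) → 𝓧 × 𝓨) := fun ω i => (X i ω, Y i ω) with hWdef
  have hW : Measurable W := measurable_pi_lambda _ hmeas
  set π : Measure (Fin (n + m) → 𝓧 × 𝓨) := Measure.pi (fun _ => P) with hπdef
  haveI : IsProbabilityMeasure π := by rw [hπdef]; infer_instance
  -- the data maps
  set A : (Fin (n + m) → 𝓧 × 𝓨) → Fin n → ℝ := fun z i => hxy (z (Fin.castAdd m i)) with hAdef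
  set B : (Fin (n + m) → 𝓧 × 𝓨) → Fin m → ℝ := fun z l => hx (z (Fin.natAdd n l)).1 with hBdef
  set C : (Fin (n + m) → 𝓧 × 𝓨) → Fin m → ℝ := fun z l => hxy (z (Fin.natAdd n l)) with hCdef
  have hA : ∀ i, Measurable (fun z => A z i) := fun i => hxym.comp (measurable_pi_apply _)
  have hB : ∀ l, Measurable (fun z => B z l) := fun l => hxm.comp ((measurable_pi_apply _).fst)
  have hC : ∀ l, Measurable (fun z => C z l) := fun l => hxym.comp (measurable_pi_apply _)
  have hcb : ∀ z (j : Fin m), C z j ≤ B z j := by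
    intro z j
    have h := hdom (z (Fin.natAdd n j)).1 (z (Fin.natAdd n j)).2
    rw [Prod.mk.eta] at h
    exact h
  -- identify the law of the data vector
  have hmap : Measure.map W ℙ = π := by
    rw [hπdef]
    refine (Measure.pi_eq (fun s hs => ?_)).symm
    rw [Measure.map_apply hW (MeasurableSet.univ_pi hs)]
    have hpre : W ⁻¹' (Set.pi Set.univ s) = ⋂ i ∈ Finset.univ, (fun ω => (X i ω, Y i ω)) ⁻¹' (s i) := by
      ext ω
      simp [hWdef, Set.mem_pi]
    rw [hpre, hindep.measure_inter_preimage_eq_mul Finset.univ (fun i _ => hs i)]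
    refine Finset.prod_congr rfl (fun i _ => ?_)
    rw [← hlaw i, Measure.map_apply (hmeas i) (hs i)]
  -- identify the integrand
  have hSet : ∀ ω, S ω = patSet (Sum.elim (A (W ω)) (B (W ω))) (fcrQS n m α) := by
    intro ω
    rw [hS ω]
    ext μ
    exact Iff.symm (mem_fcrSS_iff n m α (A (W ω)) (B (W ω)) μ)
  have hbody : (fun ω =>
      (if (S ω).Nonempty then
        (∑ i : Fin m,
            (if sInf (S ω) < hxy (X (Fin.natAdd n i) ω, Y (Fin.natAdd n i) ω) then (1:ℝ) else 0)) /
          max 1 (∑ i : Fin m,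
            (if sInf (S ω) < hx (X (Fin.natAdd n i) ω) then (1:ℝ) else 0))
      else 0)) = fun ω => fcrF n m α A B C (W ω) := by
    funext ω
    rw [fcrF, hSet ω]
  -- measurability and integrability
  have hFmeas : Measurable (fcrF n m α A B C) := fcr_meas_F n m α A B C hA hB hC
  have hPsimeas : ∀ j, Measurable (fun z => fcrPsi n m α j (A z) (B z) (C z)) :=
    fun j => fcr_meas_Psi n m α A B C hA hB hC j
  have hFint : Integrable (fcrF n m α A B C) π := by
    refine Integrable.mono' (integrable_const (m:ℝ)) hFmeas.aestronglyMeasurable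
      (Filter.Eventually.of_forall (fun z => ?_))
    rw [Real.norm_eq_abs, abs_of_nonneg (fcrF_nonneg n m α A B C z)]
    exact fcrF_le n m α A B C z
  have hPsiint : ∀ j, Integrable (fun z => fcrPsi n m α j (A z) (B z) (C z)) π := by
    intro j
    refine Integrable.mono' (integrable_const (1:ℝ)) (hPsimeas j).aestronglyMeasurable
      (Filter.Eventually.of_forall (fun z => ?_))
    rw [Real.norm_eq_abs, abs_of_nonneg (fcrPsi_nonneg n m α j (A z) (B z) (C z))]
    exact fcrPsi_le_one n m α j (A z) (B z) (C z)
  -- the per-test-point bound via exchangeability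
  have key2 : ∀ j : Fin m, ∫ z, fcrPsi n m α j (A z) (B z) (C z) ∂π ≤ 1 / ((n:ℝ) + 1) := by
    intro j
    -- structural facts about index swaps
    have hne_cn : ∀ (i : Fin n) (l : Fin m), Fin.castAdd m i ≠ Fin.natAdd n l := by
      intro i l h
      have h2 := congrArg Fin.val h
      simp only [Fin.coe_castAdd, Fin.coe_natAdd] at h2
      omega
    have hcast_inj : ∀ i i' : Fin n, (Fin.castAdd m i : Fin (n+m)) = Fin.castAdd m i' → i = i' := by
      intro i i' h
      have h2 := congrArg Fin.val h
      simp only [Fin.coe_castAdd] at h2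
      exact Fin.ext h2
    have hnat_inj : ∀ l l' : Fin m, (Fin.natAdd n l : Fin (n+m)) = Fin.natAdd n l' → l = l' := by
      intro l l' h
      have h2 := congrArg Fin.val h
      simp only [Fin.coe_natAdd] at h2
      exact Fin.ext (by omega)
    set σ : Fin n → Equiv.Perm (Fin (n + m)) :=
      fun k => Equiv.swap (Fin.castAdd m k) (Fin.natAdd n j) with hσdef
    have hdataA : ∀ (k : Fin n) (z : Fin (n+m) → 𝓧 × 𝓨),
        A (z ∘ (σ k)) = Function.update (A z) k (C z j) := by
      intro k z
      funext i
      by_cases hik : i = k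
      · subst hik
        show hxy (z ((σ i) (Fin.castAdd m i))) = _
        rw [hσdef]
        simp only [Equiv.swap_apply_left, Function.update_self]
        rfl
      · show hxy (z ((σ k) (Fin.castAdd m i))) = _
        rw [hσdef]
        rw [Equiv.swap_apply_of_ne_of_ne (fun h => hik (hcast_inj _ _ h)) (hne_cn i j),
          Function.update_of_ne hik]
    have hdataC : ∀ (k : Fin n) (z : Fin (n+m) → 𝓧 × 𝓨),
        C (z ∘ (σ k)) = Function.update (C z) j (A z k) := by
      intro k z
      funext l
      by_cases hlj : l = j
      · subst hlj
        show hxy (z ((σ k) (Fin.natAdd n l))) = _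
        rw [hσdef]
        simp only [Equiv.swap_apply_right, Function.update_self]
        rfl
      · show hxy (z ((σ k) (Fin.natAdd n l))) = _
        rw [hσdef]
        rw [Equiv.swap_apply_of_ne_of_ne (fun h => hne_cn k l h.symm)
          (fun h => hlj (hnat_inj _ _ h)), Function.update_of_ne hlj]
    have hdataB : ∀ (k : Fin n) (z : Fin (n+m) → 𝓧 × 𝓨),
        B (z ∘ (σ k)) = Function.update (B z) j (hx (z (Fin.castAdd m k)).1) := by
      intro k z
      funext l
      by_cases hlj : l = j
      · subst hlj
        show hx ((z ((σ k) (Fin.natAdd n l))).1) = _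
        rw [hσdef]
        simp only [Equiv.swap_apply_right, Function.update_self]
      · show hx ((z ((σ k) (Fin.natAdd n l))).1) = _
        rw [hσdef]
        rw [Equiv.swap_apply_of_ne_of_ne (fun h => hne_cn k l h.symm)
          (fun h => hlj (hnat_inj _ _ h)), Function.update_of_ne hlj]
    have hPsiSwap : ∀ (k : Fin n) (z : Fin (n+m) → 𝓧 × 𝓨),
        fcrPsi n m α j (A (z ∘ (σ k))) (B (z ∘ (σ k))) (C (z ∘ (σ k)))
          = fcrPsi n m α j (Function.update (A z) k (C z j)) (B z)
              (Function.update (C z) j (A z k)) := by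
      intro k z
      rw [hdataA, hdataB, hdataC, fcrPsi_update_b]
    -- measure preservation under coordinate swaps
    set E : Fin n → ((Fin (n+m) → 𝓧 × 𝓨) ≃ᵐ (Fin (n+m) → 𝓧 × 𝓨)) :=
      fun k => (MeasurableEquiv.piCongrLeft (fun _ => 𝓧 × 𝓨) (σ k)).symm with hEdef
    have hEapp : ∀ (k : Fin n) (z : Fin (n+m) → 𝓧 × 𝓨), E k z = z ∘ (σ k) := by
      intro k z
      funext i
      rw [hEdef]
      simp [MeasurableEquiv.piCongrLeft, Equiv.piCongrLeft_symm_apply]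
    have hEpres : ∀ k : Fin n, MeasurePreserving (E k) π π := by
      intro k
      rw [hEdef, hπdef]
      exact (measurePreserving_piCongrLeft (fun _ => P) (σ k)).symm _
    have hterm_int : ∀ k : Fin n, Integrable (fun z =>
        fcrPsi n m α j (Function.update (A z) k (C z j)) (B z)
          (Function.update (C z) j (A z k))) π := by
      intro k
      have h1 : Integrable ((fun z => fcrPsi n m α j (A z) (B z) (C z)) ∘ (E k)) π :=
        ((hEpres k).integrable_comp_emb (E k).measurableEmbedding).2 (hPsiint j)
      refine h1.congr (Filter.Eventually.of_forall (fun z => ?_))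
      simp only [Function.comp_apply, hEapp, hPsiSwap]
    have hterm_eq : ∀ k : Fin n, ∫ z, fcrPsi n m α j (Function.update (A z) k (C z j)) (B z)
        (Function.update (C z) j (A z k)) ∂π
          = ∫ z, fcrPsi n m α j (A z) (B z) (C z) ∂π := by
      intro k
      calc ∫ z, fcrPsi n m α j (Function.update (A z) k (C z j)) (B z)
            (Function.update (C z) j (A z k)) ∂π
          = ∫ z, fcrPsi n m α j (A (E k z)) (B (E k z)) (C (E k z)) ∂π := by
            refine integral_congr_ae (Filter.Eventually.of_forall (fun z => ?_))
            simp only [hEapp, hPsiSwap]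
        _ = ∫ z, fcrPsi n m α j (A z) (B z) (C z) ∂π :=
            (hEpres k).integral_comp' (fun z => fcrPsi n m α j (A z) (B z) (C z))
    set I : ℝ := ∫ z, fcrPsi n m α j (A z) (B z) (C z) ∂π with hIdef
    have hsum : ∫ z, ((∑ k : Fin n, fcrPsi n m α j (Function.update (A z) k (C z j)) (B z)
        (Function.update (C z) j (A z k))) + fcrPsi n m α j (A z) (B z) (C z)) ∂π ≤ 1 := by
      have hbig : Integrable (fun z => (∑ k : Fin n,
          fcrPsi n m α j (Function.update (A z) k (C z j)) (B z)
            (Function.update (C z) j (A z k))) + fcrPsi n m α j (A z) (B z) (C z)) π := by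
        refine Integrable.add ?_ (hPsiint j)
        exact integrable_finset_sum _ (fun k _ => hterm_int k)
      calc ∫ z, ((∑ k : Fin n, fcrPsi n m α j (Function.update (A z) k (C z j)) (B z)
            (Function.update (C z) j (A z k))) + fcrPsi n m α j (A z) (B z) (C z)) ∂π
          ≤ ∫ _z, (1:ℝ) ∂π := by
            refine integral_mono hbig (integrable_const 1) (fun z => ?_)
            exact fcr_stepB n m α j (A z) (B z) (C z)
        _ = 1 := by simp
    have hsplit : ∫ z, ((∑ k : Fin n, fcrPsi n m α j (Function.update (A z) k (C z j)) (B z)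
        (Function.update (C z) j (A z k))) + fcrPsi n m α j (A z) (B z) (C z)) ∂π
          = (n:ℝ) * I + I := by
      rw [integral_add (integrable_finset_sum _ (fun k _ => hterm_int k)) (hPsiint j),
        integral_finset_sum _ (fun k _ => hterm_int k)]
      congr 1
      rw [Finset.sum_congr rfl (fun k _ => hterm_eq k), Finset.sum_const, Finset.card_univ,
        Fintype.card_fin, nsmul_eq_mul]
    rw [hsplit] at hsum
    rw [le_div_iff₀ hn1]
    linarith
  -- put everything together
  rw [hbody, ← integral_map hW.aemeasurable hFmeas.aestronglyMeasurable, hmap]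
  have key1 : ∫ z, fcrF n m α A B C z ∂π
      ≤ (α * ((n:ℝ)+1) / m) * ∑ j : Fin m, ∫ z, fcrPsi n m α j (A z) (B z) (C z) ∂π := by
    have hRHSint : Integrable (fun z => (α * ((n:ℝ)+1) / m) *
        ∑ j : Fin m, fcrPsi n m α j (A z) (B z) (C z)) π :=
      (integrable_finset_sum _ (fun j _ => hPsiint j)).const_mul _
    calc ∫ z, fcrF n m α A B C z ∂π
        ≤ ∫ z, (α * ((n:ℝ)+1) / m) * ∑ j : Fin m, fcrPsi n m α j (A z) (B z) (C z) ∂π := by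
          refine integral_mono hFint hRHSint (fun z => ?_)
          exact fcr_stepA n m α hn hm hα0 (A z) (B z) (C z) (hcb z)
      _ = (α * ((n:ℝ)+1) / m) * ∑ j : Fin m, ∫ z, fcrPsi n m α j (A z) (B z) (C z) ∂π := by
          rw [integral_const_mul, integral_finset_sum _ (fun j _ => hPsiint j)]
  refine le_trans key1 ?_
  have hfin : ∑ j : Fin m, ∫ z, fcrPsi n m α j (A z) (B z) (C z) ∂π
      ≤ (m:ℝ) * (1 / ((n:ℝ)+1)) := by
    calc ∑ j : Fin m, ∫ z, fcrPsi n m α j (A z) (B z) (C z) ∂π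
        ≤ ∑ _j : Fin m, (1 / ((n:ℝ)+1)) := Finset.sum_le_sum (fun j _ => key2 j)
      _ = (m:ℝ) * (1 / ((n:ℝ)+1)) := by
          rw [Finset.sum_const, Finset.card_univ, Fintype.card_fin, nsmul_eq_mul]
  have hβ : (0:ℝ) ≤ α * ((n:ℝ)+1) / m := by positivity
  calc (α * ((n:ℝ)+1) / m) * ∑ j : Fin m, ∫ z, fcrPsi n m α j (A z) (B z) (C z) ∂π
      ≤ (α * ((n:ℝ)+1) / m) * ((m:ℝ) * (1 / ((n:ℝ)+1))) := mul_le_mul_of_nonneg_left hfin hβ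
    _ = α := by
        field_simp
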